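/- (Rodrigues' formula / closed form of Γ₀.) For every nonzero φ ∈ ℝ³, exp_m(φ̂) = I₃ + (sin‖φ‖ / ‖φ‖) φ̂ + ((1 − cos‖φ‖) / ‖φ‖²) φ̂², where ‖φ‖ is the Euclidean norm of φ. -/

import Mathlib

open Matrix

/-- The skew-symmetric (hat) matrix of a vector `φ ∈ ℝ³`, so that `skew φ *ᵥ x = φ × x`. -/
noncomputable def skew (φ : Fin 3 → ℝ) : Matrix (Fin 3) (Fin 3) ℝ :=
  !![0, -φ 2, φ 1; φ 2, 0, -φ 0; -φ 1, φ 0, 0]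

/-- The Euclidean norm of a vector in `ℝ³`. -/
noncomputable def enorm3 (φ : Fin 3 → ℝ) : ℝ :=
  Real.sqrt (∑ i, φ i ^ 2)

lemma skew_pow_three (φ : Fin 3 → ℝ) :
    skew φ ^ 3 = (-(φ 0 ^ 2 + φ 1 ^ 2 + φ 2 ^ 2)) • skew φ := by
  show skew φ ^ 3 = _
  rw [pow_succ, pow_succ, pow_one]
  ext i j
  fin_cases i <;> fin_cases j <;>
    simp [skew, Matrix.mul_apply, Fin.sum_univ_three] <;> ring

lemma skew_pow_odd (S : Matrix (Fin 3) (Fin 3) ℝ) (t : ℝ)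
    (h3 : S ^ 3 = (-(t ^ 2)) • S) (n : ℕ) :
    S ^ (2 * n + 1) = ((-1 : ℝ) ^ n * t ^ (2 * n)) • S := by
  induction n with
  | zero => simp
  | succ n ih =>
    have h : 2 * (n + 1) + 1 = (2 * n + 1) + 2 := by ring
    rw [h, pow_add, ih, smul_mul_assoc]
    rw [← pow_succ', h3, smul_smul]
    congr 1
    ring

lemma skew_pow_even (S : Matrix (Fin 3) (Fin 3) ℝ) (t : ℝ)
    (h3 : S ^ 3 = (-(t ^ 2)) • S) (n : ℕ) :
    S ^ (2 * n + 2) = ((-1 : ℝ) ^ n * t ^ (2 * n)) • S ^ 2 := by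
  have h : (2 * n + 2) = (2 * n + 1) + 1 := by ring
  rw [h, pow_succ, skew_pow_odd S t h3 n, smul_mul_assoc, ← sq]

set_option maxHeartbeats 1000000 in
/-- **Rodrigues' formula** (closed form of `Γ₀`): for nonzero `φ ∈ ℝ³`,
`exp_m(φ̂) = I₃ + (sin‖φ‖/‖φ‖) φ̂ + ((1 − cos‖φ‖)/‖φ‖²) φ̂²`. -/
theorem rodrigues_formula (φ : Fin 3 → ℝ) (hφ : φ ≠ 0) :
    NormedSpace.exp (skew φ) =
      1 + (Real.sin (enorm3 φ) / enorm3 φ) • skew φ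
        + ((1 - Real.cos (enorm3 φ)) / enorm3 φ ^ 2) • skew φ ^ 2 := by
  set t := enorm3 φ with htdef
  obtain ⟨i, hi⟩ := Function.ne_iff.mp hφ
  have hsum : (0 : ℝ) < ∑ i, φ i ^ 2 := by
    refine Finset.sum_pos' (fun j _ => sq_nonneg _) ⟨i, Finset.mem_univ i, ?_⟩
    exact lt_of_le_of_ne (sq_nonneg _) (Ne.symm (pow_ne_zero 2 hi))
  have ht0 : 0 < t := by
    rw [htdef, enorm3]
    exact Real.sqrt_pos.mpr hsum
  have htne : t ≠ 0 := ht0.ne'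
  have ht2 : t ^ 2 = φ 0 ^ 2 + φ 1 ^ 2 + φ 2 ^ 2 := by
    rw [htdef, enorm3, Real.sq_sqrt hsum.le, Fin.sum_univ_three]
  have h3 : skew φ ^ 3 = (-(t ^ 2)) • skew φ := by
    rw [ht2]; exact skew_pow_three φ
  rw [NormedSpace.exp_eq_tsum (𝕂 := ℝ)]
  refine HasSum.tsum_eq ?_
  have hodd : HasSum (fun k : ℕ => ((Nat.factorial (2 * k + 1) : ℝ))⁻¹ • skew φ ^ (2 * k + 1))
      ((Real.sin t / t) • skew φ) := by
    have h := ((Real.hasSum_sin t).div_const t).smul_const (skew φ)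
    convert h using 2 with k
    rw [skew_pow_odd _ _ h3, smul_smul]
    congr 1
    field_simp
    ring
  have heven1 : HasSum (fun k : ℕ => ((Nat.factorial (2 * (k + 1)) : ℝ))⁻¹ • skew φ ^ (2 * (k + 1)))
      (((1 - Real.cos t) / t ^ 2) • skew φ ^ 2) := by
    have h1 : HasSum (fun k : ℕ => -((-1 : ℝ) ^ (k + 1) * t ^ (2 * (k + 1)) / Nat.factorial (2 * (k + 1))))
        (1 - Real.cos t) := by
      have h := ((hasSum_nat_add_iff'
        (f := fun n : ℕ => (-1 : ℝ) ^ n * t ^ (2 * n) / Nat.factorial (2 * n)) 1).mpr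
        (Real.hasSum_cos t)).neg
      simpa using h
    have h := (h1.div_const (t ^ 2)).smul_const (skew φ ^ 2)
    convert h using 2 with k
    rw [show 2 * (k + 1) = 2 * k + 2 from by ring, skew_pow_even _ _ h3, smul_smul]
    congr 1
    field_simp
    ring
  have heven : HasSum (fun k : ℕ => ((Nat.factorial (2 * k) : ℝ))⁻¹ • skew φ ^ (2 * k))
      (((1 - Real.cos t) / t ^ 2) • skew φ ^ 2 + 1) := by
    have h := (hasSum_nat_add_iff
      (f := fun k : ℕ => ((Nat.factorial (2 * k) : ℝ))⁻¹ • skew φ ^ (2 * k)) 1).mp heven1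
    simpa using h
  have h := HasSum.even_add_odd (f := fun n : ℕ => ((Nat.factorial n : ℝ))⁻¹ • skew φ ^ n) heven hodd
  convert h using 1
  · rfl
  abel
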